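/- Max-Flow-Min-Cut: in a finite network G where each edge e has capacity w(e) ≥ 0, and for disjoint vertex sets A and Z, the maximal strength of a flow θ from A to Z satisfying |θ(e)| ≤ w(e) for all directed edges equals the minimum over cut sets π separating A from Z of ∑_{e ∈ π} w(e). -/

import Mathlib

open Finset

private lemma mfmc_skew_sum {V : Type*} [Fintype V] [DecidableEq V]
    (θ : V → V → ℝ) (hskew : ∀ x y, θ x y = -θ y x) (S : Finset V) :
    ∑ x ∈ S, ∑ y ∈ S, θ x y = 0 := by
  have h2 : ∑ x ∈ S, ∑ y ∈ S, θ x y = -∑ x ∈ S, ∑ y ∈ S, θ x y := by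
    calc ∑ x ∈ S, ∑ y ∈ S, θ x y = ∑ y ∈ S, ∑ x ∈ S, θ x y := Finset.sum_comm
    _ = ∑ y ∈ S, ∑ x ∈ S, -θ y x :=
        Finset.sum_congr rfl fun y _ => Finset.sum_congr rfl fun x _ => hskew x y
    _ = -∑ x ∈ S, ∑ y ∈ S, θ x y := by simp [Finset.sum_neg_distrib]
  linarith

private lemma mfmc_group_flow {V : Type*} [Fintype V] [DecidableEq V]
    (θ : V → V → ℝ) (hskew : ∀ x y, θ x y = -θ y x)
    (A Z S : Finset V)
    (hdiv : ∀ x, x ∉ A → x ∉ Z → ∑ y, θ x y = 0)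
    (hAS : A ⊆ S) (hZS : ∀ z ∈ Z, z ∉ S) :
    ∑ x ∈ A, ∑ y, θ x y = ∑ x ∈ S, ∑ y ∈ Sᶜ, θ x y := by
  have h1 : ∑ x ∈ S, ∑ y, θ x y = ∑ x ∈ A, ∑ y, θ x y :=
    (Finset.sum_subset hAS fun x hxS hxA =>
      hdiv x hxA (fun hz => hZS x hz hxS)).symm
  have h2 : ∑ x ∈ S, ∑ y, θ x y
      = ∑ x ∈ S, ∑ y ∈ S, θ x y + ∑ x ∈ S, ∑ y ∈ Sᶜ, θ x y := by
    rw [← Finset.sum_add_distrib]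
    exact Finset.sum_congr rfl fun x _ => (Finset.sum_add_sum_compl S _).symm
  rw [← h1, h2, mfmc_skew_sum θ hskew S, zero_add]

private lemma mfmc_delta_div {V : Type*} [Fintype V] [DecidableEq V]
    {G : SimpleGraph V} (ε : ℝ) {a z : V} (q : G.Walk a z) (hq : q.IsPath) (x : V) :
    ∑ y, ((if (x, y) ∈ q.darts.map (fun d => (d.fst, d.snd)) then ε else 0)
        - (if (y, x) ∈ q.darts.map (fun d => (d.fst, d.snd)) then ε else 0))
    = (if x = a then ε else 0) - (if x = z then ε else 0) := by
  have indor : ∀ (p r : Prop) [Decidable p] [Decidable r], ¬(p ∧ r) →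
      ((if p ∨ r then ε else 0) = (if p then ε else 0) + (if r then ε else 0)) := by
    intro p r _ _ hpr
    by_cases hp : p
    · have hr : ¬r := fun hr => hpr ⟨hp, hr⟩
      simp [hp, hr]
    · simp [hp]
  induction q with
  | nil => simp
  | @cons a b c h q ih =>
    rw [SimpleGraph.Walk.cons_isPath_iff] at hq
    obtain ⟨hq', ha⟩ := hq
    have hab1 : (a, b) ∉ q.darts.map (fun d => (d.fst, d.snd)) := by
      intro hm
      obtain ⟨d, hd, hde⟩ := List.mem_map.mp hm
      exact ha (by
        have : d.fst = a := (Prod.mk.injEq _ _ _ _ ▸ hde).1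
        exact this ▸ SimpleGraph.Walk.dart_fst_mem_support_of_mem_darts q hd)
    have hstep : ∀ y : V,
        ((if (x, y) ∈ (SimpleGraph.Walk.cons h q).darts.map (fun d => (d.fst, d.snd)) then ε else 0)
          - (if (y, x) ∈ (SimpleGraph.Walk.cons h q).darts.map (fun d => (d.fst, d.snd)) then ε else 0))
        = ((if (x, y) = (a, b) then ε else 0) + (if (x, y) ∈ q.darts.map (fun d => (d.fst, d.snd)) then ε else 0))
          - ((if (y, x) = (a, b) then ε else 0) + (if (y, x) ∈ q.darts.map (fun d => (d.fst, d.snd)) then ε else 0)) := by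
      intro y
      simp only [SimpleGraph.Walk.darts_cons, List.map_cons, List.mem_cons]
      rw [indor _ _ (by rintro ⟨h1, h2⟩; exact hab1 (h1 ▸ h2)),
        indor _ _ (by rintro ⟨h1, h2⟩; exact hab1 (h1 ▸ h2))]
    rw [Finset.sum_congr rfl fun y _ => hstep y]
    have e1 : ∑ y : V, (if (x, y) = (a, b) then ε else 0) = if x = a then ε else 0 := by
      simp only [Prod.mk.injEq]
      by_cases hx : x = a <;> simp [hx]
    have e2 : ∑ y : V, (if (y, x) = (a, b) then ε else 0) = if x = b then ε else 0 := by
      simp only [Prod.mk.injEq]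
      by_cases hx : x = b <;> simp [hx]
    have ihq := ih hq'
    simp only [Finset.sum_sub_distrib, Finset.sum_add_distrib] at *
    rw [e1, e2]
    linarith [ihq]


/-- **Max-Flow-Min-Cut theorem** for a finite network `G` with edge capacities
`w(e) ≥ 0` and disjoint vertex sets `A` and `Z`: the maximal strength of a flow
`θ` from `A` to `Z` satisfying `|θ(e)| ≤ w(e)` on all directed edges equals the
minimum over cut sets `π` separating `A` from `Z` of `∑_{e ∈ π} w(e)`.
A flow from `A` to `Z` is an antisymmetric function on directed edges,
supported on the edges of `G`, with zero divergence outside `A ∪ Z` and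
nonnegative total outflow from `A` (the strength); a cut set `π ⊆ E(G)`
separates `A` and `Z` if every path from `A` to `Z` uses an edge of `π`. -/
theorem maxFlow_eq_minCut {V : Type*} [Fintype V] [DecidableEq V]
    (G : SimpleGraph V) (w : Sym2 V → ℝ) (hw : ∀ e, 0 ≤ w e)
    (A Z : Finset V) (hAZ : Disjoint A Z) :
    ∃ m : ℝ,
      IsGreatest {str : ℝ | ∃ θ : V → V → ℝ,
          (∀ x y, θ x y = -θ y x) ∧
          (∀ x y, ¬ G.Adj x y → θ x y = 0) ∧
          (∀ x, x ∉ A → x ∉ Z → ∑ y, θ x y = 0) ∧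
          (∀ x y, |θ x y| ≤ w s(x, y)) ∧
          0 ≤ str ∧ str = ∑ x ∈ A, ∑ y, θ x y} m ∧
      IsLeast {cutVal : ℝ | ∃ π : Finset (Sym2 V),
          (↑π ⊆ G.edgeSet) ∧
          (∀ (u v : V), u ∈ A → v ∈ Z → ∀ p : G.Walk u v, ∃ e ∈ p.edges, e ∈ π) ∧
          cutVal = ∑ e ∈ π, w e} m := by
  classical
  set K : Set (V → V → ℝ) := {θ | (∀ x y, θ x y = -θ y x) ∧ (∀ x y, ¬ G.Adj x y → θ x y = 0) ∧
      (∀ x, x ∉ A → x ∉ Z → ∑ y, θ x y = 0) ∧ (∀ x y, |θ x y| ≤ w s(x, y))} with hK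
  have h0K : (0 : V → V → ℝ) ∈ K := ⟨by simp, by simp, by simp, by intro x y; simpa using hw _⟩
  have hc : ∀ x y : V, Continuous fun θ : V → V → ℝ => θ x y :=
    fun x y => (continuous_apply y).comp (continuous_apply x)
  have hstr_cont : Continuous fun θ : V → V → ℝ => ∑ x ∈ A, ∑ y, θ x y := by
    apply continuous_finset_sum; intro x _; apply continuous_finset_sum; intro y _; exact hc x y
  -- compactness of K
  have hKc : IsCompact K := by
    have hKeq : K = (Set.pi Set.univ fun x => Set.pi Set.univ fun y =>
          Set.Icc (-(if G.Adj x y then w s(x, y) else 0)) (if G.Adj x y then w s(x, y) else 0)) ∩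
        {θ : V → V → ℝ | (∀ x y, θ x y = -θ y x) ∧ (∀ x, x ∉ A → x ∉ Z → ∑ y, θ x y = 0)} := by
      ext θ
      simp only [hK, Set.mem_setOf_eq, Set.mem_inter_iff, Set.mem_pi, Set.mem_univ, true_implies,
        Set.mem_Icc, ← abs_le]
      constructor
      · rintro ⟨h1, h2, h3, h4⟩
        refine ⟨fun x y => ?_, h1, h3⟩
        by_cases hadj : G.Adj x y
        · simpa [hadj] using h4 x y
        · simp [hadj, h2 x y hadj]
      · rintro ⟨hb, h1, h3⟩
        refine ⟨h1, fun x y hn => ?_, h3, fun x y => ?_⟩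
        · have hb' := hb x y
          rw [if_neg hn] at hb'
          exact abs_eq_zero.mp (le_antisymm hb' (abs_nonneg _))
        · refine (hb x y).trans ?_
          by_cases hadj : G.Adj x y <;> simp [hadj, hw]
    rw [hKeq]
    refine IsCompact.inter_right ?_ ?_
    · exact isCompact_univ_pi fun x => isCompact_univ_pi fun y => isCompact_Icc
    · refine IsClosed.inter ?_ ?_
      · have : {θ : V → V → ℝ | ∀ x y, θ x y = -θ y x} =
            ⋂ x, ⋂ y, {θ : V → V → ℝ | θ x y = -θ y x} := by
          ext θ; simp [Set.mem_iInter]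
        have hcl : IsClosed (⋂ x, ⋂ y, {θ : V → V → ℝ | θ x y = -θ y x}) :=
          isClosed_iInter fun x => isClosed_iInter fun y => isClosed_eq (hc x y) (hc y x).neg
        rw [show (IsClosed fun θ : V → V → ℝ => ∀ x y, θ x y = -θ y x) =
            IsClosed {θ : V → V → ℝ | ∀ x y, θ x y = -θ y x} from rfl, this]
        exact hcl
      · have : {θ : V → V → ℝ | ∀ x, x ∉ A → x ∉ Z → ∑ y, θ x y = 0} =
            ⋂ x, ⋂ (_ : x ∉ A), ⋂ (_ : x ∉ Z), {θ : V → V → ℝ | ∑ y, θ x y = 0} := by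
          ext θ; simp [Set.mem_iInter]
        have hcl : IsClosed (⋂ x, ⋂ (_ : x ∉ A), ⋂ (_ : x ∉ Z), {θ : V → V → ℝ | ∑ y, θ x y = 0}) :=
          isClosed_iInter fun x => isClosed_iInter fun _ => isClosed_iInter fun _ =>
            isClosed_eq (continuous_finset_sum _ fun y _ => hc x y) continuous_const
        rw [show (IsClosed fun θ : V → V → ℝ => ∀ x, x ∉ A → x ∉ Z → ∑ y, θ x y = 0) =
            IsClosed {θ : V → V → ℝ | ∀ x, x ∉ A → x ∉ Z → ∑ y, θ x y = 0} from rfl, this]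
        exact hcl
  obtain ⟨θ, hθK, hθmax⟩ := hKc.exists_isMaxOn ⟨0, h0K⟩ hstr_cont.continuousOn
  obtain ⟨hθ1, hθ2, hθ3, hθ4⟩ := hθK
  -- residual reachability
  set S : Finset V := univ.filter (fun x => ∃ a ∈ A, ∃ p : G.Walk a x,
      ∀ d ∈ p.darts, θ d.fst d.snd < w s(d.fst, d.snd)) with hS
  have hAS : A ⊆ S := fun a ha => mem_filter.mpr ⟨mem_univ _, a, ha, SimpleGraph.Walk.nil, by simp⟩
  have hSclo : ∀ x ∈ S, ∀ y, G.Adj x y → θ x y < w s(x, y) → y ∈ S := by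
    intro x hx y hadj hlt
    obtain ⟨-, a, ha, p, hp⟩ := mem_filter.mp hx
    refine mem_filter.mpr ⟨mem_univ _, a, ha, p.concat hadj, ?_⟩
    intro d hd
    rw [SimpleGraph.Walk.darts_concat, List.concat_eq_append, List.mem_append] at hd
    rcases hd with hd | hd
    · exact hp d hd
    · simp only [List.mem_singleton] at hd
      subst hd
      exact hlt
  have hZS : ∀ z ∈ Z, z ∉ S := by
    intro z hz hzS
    obtain ⟨-, a, ha, p0, hp0⟩ := mem_filter.mp hzS
    have haz : a ≠ z := fun h => (Finset.disjoint_left.mp hAZ ha) (h ▸ hz)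
    obtain ⟨q, hq, hres⟩ : ∃ q : G.Walk a z, q.IsPath ∧
        ∀ d ∈ q.darts, θ d.fst d.snd < w s(d.fst, d.snd) :=
      ⟨p0.bypass, p0.bypass_isPath, fun d hd => hp0 d (p0.darts_bypass_subset hd)⟩
    have hne : q.darts ≠ [] := by
      intro hnil
      have hsup := q.cons_map_snd_darts
      rw [hnil] at hsup
      have hz' := q.end_mem_support
      rw [← hsup] at hz'
      simp only [List.map_nil, List.mem_singleton] at hz'
      exact haz hz'.symm
    have hTne : ((q.darts.toFinset).image
        (fun d => w s(d.fst, d.snd) - θ d.fst d.snd)).Nonempty := by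
      obtain ⟨d, hd⟩ := List.exists_mem_of_ne_nil _ hne
      exact ⟨_, mem_image_of_mem _ (List.mem_toFinset.mpr hd)⟩
    set ε : ℝ := ((q.darts.toFinset).image
        (fun d => w s(d.fst, d.snd) - θ d.fst d.snd)).min' hTne with hε
    have hεpos : 0 < ε := by
      rw [hε, Finset.lt_min'_iff]
      intro b hb
      obtain ⟨d, hd, rfl⟩ := mem_image.mp hb
      have := hres d (List.mem_toFinset.mp hd)
      linarith
    have hεle : ∀ d ∈ q.darts, ε ≤ w s(d.fst, d.snd) - θ d.fst d.snd := fun d hd =>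
      Finset.min'_le _ _ (mem_image_of_mem _ (List.mem_toFinset.mpr hd))
    set D : List (V × V) := q.darts.map (fun d => (d.fst, d.snd)) with hD
    have hDmem : ∀ x y : V, (x, y) ∈ D → ∃ d ∈ q.darts, d.fst = x ∧ d.snd = y := by
      intro x y hm
      rw [hD] at hm
      obtain ⟨d, hd, hde⟩ := List.mem_map.mp hm
      exact ⟨d, hd, (Prod.mk.injEq _ _ _ _ ▸ hde).1, (Prod.mk.injEq _ _ _ _ ▸ hde).2⟩
    have hDadj : ∀ x y : V, (x, y) ∈ D → G.Adj x y := by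
      intro x y hm
      obtain ⟨d, hd, h1, h2⟩ := hDmem x y hm
      exact h1 ▸ h2 ▸ d.adj
    have hDle : ∀ x y : V, (x, y) ∈ D → ε ≤ w s(x, y) - θ x y := by
      intro x y hm
      obtain ⟨d, hd, h1, h2⟩ := hDmem x y hm
      have := hεle d hd
      rw [h1, h2] at this
      exact this
    have hDnb : ∀ x y : V, (x, y) ∈ D → (y, x) ∈ D → False := by
      intro x y h1 h2
      obtain ⟨d1, hd1, h11, h12⟩ := hDmem x y h1
      obtain ⟨d2, hd2, h21, h22⟩ := hDmem y x h2
      have hxy : x ≠ y := (h11 ▸ h12 ▸ d1.adj).ne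
      have he1 : d1.edge = s(x, y) := by
        rw [SimpleGraph.dart_edge_eq_mk'_iff']; exact Or.inl ⟨h11, h12⟩
      have he2 : d2.edge = s(x, y) := by
        rw [SimpleGraph.dart_edge_eq_mk'_iff']; exact Or.inr ⟨h21, h22⟩
      have hd12 : d1 = d2 := by
        have hnodup : (q.darts.map SimpleGraph.Dart.edge).Nodup := hq.isTrail.edges_nodup
        exact List.inj_on_of_nodup_map hnodup hd1 hd2 (he1.trans he2.symm)
      rw [hd12] at h11
      rw [h11] at h21
      exact hxy (h21.symm ▸ rfl)
    -- the augmented flow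
    set δ : V → V → ℝ := fun x y => (if (x, y) ∈ D then ε else 0) - (if (y, x) ∈ D then ε else 0)
      with hδ
    have hδdiv : ∀ x : V, ∑ y, δ x y = (if x = a then ε else 0) - (if x = z then ε else 0) := by
      intro x
      rw [hδ]
      exact mfmc_delta_div ε q hq x
    have hθ'K : (fun x y => θ x y + δ x y) ∈ K := by
      refine ⟨?_, ?_, ?_, ?_⟩
      · intro x y
        simp only [hδ]
        rw [hθ1 x y]
        ring
      · intro x y hadj
        have hxy : (x, y) ∉ D := fun hm => hadj (hDadj x y hm)
        have hyx : (y, x) ∉ D := fun hm => hadj ((hDadj y x hm).symm)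
        simp only [hδ, if_neg hxy, if_neg hyx, hθ2 x y hadj]
        ring
      · intro x hxA hxZ
        rw [Finset.sum_add_distrib, hθ3 x hxA hxZ, hδdiv x]
        have hxa : x ≠ a := fun h => hxA (h ▸ ha)
        have hxz : x ≠ z := fun h => hxZ (h ▸ hz)
        rw [if_neg hxa, if_neg hxz]
        ring
      · intro x y
        rw [abs_le]
        have hb := abs_le.mp (hθ4 x y)
        by_cases hxy : (x, y) ∈ D
        · have hyx : (y, x) ∉ D := fun hm => hDnb x y hxy hm
          have hle := hDle x y hxy
          simp only [hδ, if_pos hxy, if_neg hyx]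
          constructor <;> [linarith; linarith]
        · by_cases hyx : (y, x) ∈ D
          · have hle := hDle y x hyx
            rw [Sym2.eq_swap] at hle
            rw [hθ1 y x] at hle
            simp only [hδ, if_neg hxy, if_pos hyx]
            constructor <;> [linarith; linarith]
          · simp only [hδ, if_neg hxy, if_neg hyx]
            constructor <;> [linarith; linarith]
    have hgain : ∑ x ∈ A, ∑ y, (θ x y + δ x y) = (∑ x ∈ A, ∑ y, θ x y) + ε := by
      have : ∀ x ∈ A, ∑ y, (θ x y + δ x y)
          = ∑ y, θ x y + ((if x = a then ε else 0) - (if x = z then ε else 0)) := by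
        intro x hx
        rw [Finset.sum_add_distrib, hδdiv x]
      rw [Finset.sum_congr rfl this, Finset.sum_add_distrib, Finset.sum_sub_distrib]
      rw [Finset.sum_ite_eq' A a fun _ => ε, Finset.sum_ite_eq' A z fun _ => ε]
      rw [if_pos ha, if_neg (fun h => (Finset.disjoint_left.mp hAZ h) hz)]
      ring
    have hcontra := hθmax hθ'K
    simp only [Set.mem_setOf_eq] at hcontra
    rw [hgain] at hcontra
    linarith
  -- the min cut
  set Q : Finset (V × V) := (S ×ˢ Sᶜ).filter (fun p => G.Adj p.1 p.2) with hQ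
  set π : Finset (Sym2 V) := Q.image (fun p => s(p.1, p.2)) with hπ
  have hπE : ↑π ⊆ G.edgeSet := by
    intro e he
    simp only [hπ, coe_image, Set.mem_image, mem_coe, hQ, mem_filter] at he
    obtain ⟨p, ⟨-, hadj⟩, rfl⟩ := he
    exact hadj
  have hsep : ∀ (u v : V), u ∈ A → v ∈ Z → ∀ p : G.Walk u v, ∃ e ∈ p.edges, e ∈ π := by
    intro u v hu hv p
    obtain ⟨d, hd, hd1, hd2⟩ := p.exists_boundary_dart (↑S) (hAS hu) (fun hvS => hZS v hv hvS)
    refine ⟨d.edge, ?_, ?_⟩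
    · exact List.mem_map_of_mem (f := SimpleGraph.Dart.edge) hd
    · refine mem_image.mpr ⟨(d.fst, d.snd), ?_, rfl⟩
      exact mem_filter.mpr ⟨mem_product.mpr ⟨hd1, mem_compl.mpr hd2⟩, d.adj⟩
  have hQinj : ∀ p ∈ Q, ∀ q ∈ Q, s(p.1, p.2) = s(q.1, q.2) → p = q := by
    intro p hp q hq he
    obtain ⟨hp', -⟩ := mem_filter.mp hp
    obtain ⟨hq', -⟩ := mem_filter.mp hq
    obtain ⟨hp1, hp2⟩ := mem_product.mp hp'
    obtain ⟨hq1, hq2⟩ := mem_product.mp hq'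
    rcases Sym2.eq_iff.mp he with ⟨h1, h2⟩ | ⟨h1, h2⟩
    · exact Prod.ext h1 h2
    · exact absurd (h1 ▸ hp1) (mem_compl.mp hq2)
  have hcutval : ∑ e ∈ π, w e = ∑ x ∈ A, ∑ y, θ x y := by
    rw [hπ, Finset.sum_image hQinj]
    have hsat : ∀ p ∈ Q, w s(p.1, p.2) = θ p.1 p.2 := by
      intro p hp
      obtain ⟨hp', hadj⟩ := mem_filter.mp hp
      obtain ⟨hp1, hp2⟩ := mem_product.mp hp'
      have hle : θ p.1 p.2 ≤ w s(p.1, p.2) := le_trans (le_abs_self _) (hθ4 _ _)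
      rcases hle.lt_or_eq with hlt | heq
      · exact absurd (hSclo p.1 hp1 p.2 hadj hlt) (mem_compl.mp hp2)
      · exact heq.symm
    rw [Finset.sum_congr rfl hsat]
    have hQfull : ∑ p ∈ Q, θ p.1 p.2 = ∑ p ∈ S ×ˢ Sᶜ, θ p.1 p.2 := by
      rw [hQ]
      refine Finset.sum_filter_of_ne ?_
      intro p hp hne
      by_contra hadj
      exact hne (hθ2 _ _ hadj)
    rw [hQfull, Finset.sum_product, ← mfmc_group_flow θ hθ1 A Z S hθ3 hAS hZS]
  -- weak duality
  have hweak : ∀ θ₀ : V → V → ℝ, θ₀ ∈ K → ∀ π₀ : Finset (Sym2 V), ↑π₀ ⊆ G.edgeSet →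
      (∀ (u v : V), u ∈ A → v ∈ Z → ∀ p : G.Walk u v, ∃ e ∈ p.edges, e ∈ π₀) →
      ∑ x ∈ A, ∑ y, θ₀ x y ≤ ∑ e ∈ π₀, w e := by
    rintro θ₀ ⟨g1, g2, g3, g4⟩ π₀ hπ₀E hsep₀
    set S₀ : Finset V := univ.filter (fun x => ∃ a ∈ A, ∃ p : G.Walk a x,
        ∀ e ∈ p.edges, e ∉ π₀) with hS₀
    have hAS₀ : A ⊆ S₀ := fun a ha =>
      mem_filter.mpr ⟨mem_univ _, a, ha, SimpleGraph.Walk.nil, by simp⟩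
    have hZS₀ : ∀ z ∈ Z, z ∉ S₀ := by
      intro z hz hzS
      obtain ⟨-, a, ha, p, hp⟩ := mem_filter.mp hzS
      obtain ⟨e, he, heπ⟩ := hsep₀ a z ha hz p
      exact hp e he heπ
    have hclo₀ : ∀ x ∈ S₀, ∀ y, G.Adj x y → s(x, y) ∉ π₀ → y ∈ S₀ := by
      intro x hx y hadj hne
      obtain ⟨-, a, ha, p, hp⟩ := mem_filter.mp hx
      refine mem_filter.mpr ⟨mem_univ _, a, ha, p.concat hadj, ?_⟩
      intro e he
      rw [SimpleGraph.Walk.edges_concat, List.concat_eq_append, List.mem_append] at he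
      rcases he with he | he
      · exact hp e he
      · simp only [List.mem_singleton] at he
        subst he
        exact hne
    have hinj₀ : ∀ p ∈ (S₀ ×ˢ S₀ᶜ).filter (fun p => s(p.1, p.2) ∈ π₀),
        ∀ q ∈ (S₀ ×ˢ S₀ᶜ).filter (fun p => s(p.1, p.2) ∈ π₀),
        s(p.1, p.2) = s(q.1, q.2) → p = q := by
      intro p hp q hq he
      obtain ⟨hp', -⟩ := mem_filter.mp hp
      obtain ⟨hq', -⟩ := mem_filter.mp hq
      obtain ⟨hp1, hp2⟩ := mem_product.mp hp'
      obtain ⟨hq1, hq2⟩ := mem_product.mp hq'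
      rcases Sym2.eq_iff.mp he with ⟨h1, h2⟩ | ⟨h1, h2⟩
      · exact Prod.ext h1 h2
      · exact absurd (h1 ▸ hp1) (mem_compl.mp hq2)
    rw [mfmc_group_flow θ₀ g1 A Z S₀ g3 hAS₀ hZS₀]
    calc ∑ x ∈ S₀, ∑ y ∈ S₀ᶜ, θ₀ x y
        = ∑ p ∈ S₀ ×ˢ S₀ᶜ, θ₀ p.1 p.2 := by rw [Finset.sum_product]
      _ ≤ ∑ p ∈ S₀ ×ˢ S₀ᶜ, (if s(p.1, p.2) ∈ π₀ then w s(p.1, p.2) else 0) := by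
          refine Finset.sum_le_sum fun p hp => ?_
          obtain ⟨hp1, hp2⟩ := mem_product.mp hp
          by_cases hmem : s(p.1, p.2) ∈ π₀
          · rw [if_pos hmem]
            exact le_trans (le_abs_self _) (g4 _ _)
          · rw [if_neg hmem]
            by_cases hadj : G.Adj p.1 p.2
            · exact absurd (hclo₀ p.1 hp1 p.2 hadj hmem) (mem_compl.mp hp2)
            · exact le_of_eq (g2 _ _ hadj)
      _ = ∑ p ∈ (S₀ ×ˢ S₀ᶜ).filter (fun p => s(p.1, p.2) ∈ π₀), w s(p.1, p.2) :=
          (Finset.sum_filter _ _).symm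
      _ = ∑ e ∈ ((S₀ ×ˢ S₀ᶜ).filter (fun p => s(p.1, p.2) ∈ π₀)).image (fun p => s(p.1, p.2)),
            w e := (Finset.sum_image hinj₀).symm
      _ ≤ ∑ e ∈ π₀, w e := by
          refine Finset.sum_le_sum_of_subset_of_nonneg ?_ (fun e _ _ => hw e)
          intro e he
          obtain ⟨p, hp, rfl⟩ := mem_image.mp he
          exact (mem_filter.mp hp).2
  -- conclusion
  refine ⟨∑ x ∈ A, ∑ y, θ x y, ⟨⟨θ, hθ1, hθ2, hθ3, hθ4, ?_, rfl⟩, ?_⟩, ⟨π, hπE, hsep, hcutval.symm⟩, ?_⟩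
  · simpa using hθmax h0K
  · rintro s ⟨θ₀, g1, g2, g3, g4, -, rfl⟩
    exact hθmax (⟨g1, g2, g3, g4⟩ : θ₀ ∈ K)
  · rintro c ⟨π₀, hπ₀E, hsep₀, rfl⟩
    exact hweak θ ⟨hθ1, hθ2, hθ3, hθ4⟩ π₀ hπ₀E hsep₀
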